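/- Let k ≥ 1 be an integer, let f ∈ C^k(ℝ^d) have all partial derivatives of order at most k bounded, and let K : ℝ^d → ℝ be integrable with ∫_{ℝ^d} K(t) dt = 1, ∫_{ℝ^d} |t|^k |K(t)| dt < ∞, and ∫_{ℝ^d} t_1^{s_1} ⋯ t_d^{s_d} K(t) dt = 0 for all nonnegative integers s_1, …, s_d with 1 ≤ s_1 + ⋯ + s_d ≤ k. Then there is a constant C < ∞ such that for all t ∈ ℝ^d and all h > 0, | ∫_{ℝ^d} K_h(t − u) f(u) du − f(t) | ≤ C h^{k/d}. -/

import Mathlib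

open MeasureTheory
open scoped Nat

section aux

variable {E' : Type*} [NormedAddCommGroup E'] [NormedSpace ℝ E']

/-- Derivatives of `f` along a line. -/
lemma lineDeriv_eq {k : ℕ} {f : E' → ℝ} (hf : ContDiff ℝ (k : ℕ∞) f) (x w : E') :
    ∀ n : ℕ, n ≤ k → ∀ s : ℝ,
      iteratedDeriv n (fun s : ℝ => f (x + s • w)) s
        = iteratedFDeriv ℝ n f (x + s • w) (fun _ => w) := by
  intro n
  induction n with
  | zero =>
    intro _ s
    simp
  | succ n IH =>
    intro hn s
    have hIH : iteratedDeriv n (fun s : ℝ => f (x + s • w))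
        = fun s => ContinuousMultilinearMap.apply ℝ (fun _ : Fin n => E') ℝ (fun _ => w)
            (iteratedFDeriv ℝ n f (x + s • w)) :=
      funext fun s => IH (Nat.le_of_succ_le hn) s
    rw [iteratedDeriv_succ, hIH]
    have hγ : HasDerivAt (fun s : ℝ => x + s • w) w s := by
      simpa using ((hasDerivAt_id s).smul_const w).const_add x
    have hdiff : DifferentiableAt ℝ (iteratedFDeriv ℝ n f) (x + s • w) :=
      (hf.differentiable_iteratedFDeriv (by exact_mod_cast Nat.lt_of_succ_le hn)) _
    have h1 : HasDerivAt (fun s : ℝ => iteratedFDeriv ℝ n f (x + s • w))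
        (fderiv ℝ (iteratedFDeriv ℝ n f) (x + s • w) w) s :=
      hdiff.hasFDerivAt.comp_hasDerivAt s hγ
    have h2 := (ContinuousMultilinearMap.apply ℝ (fun _ : Fin n => E') ℝ
        (fun _ => w)).hasFDerivAt.comp_hasDerivAt s h1
    have h2' : HasDerivAt (fun s : ℝ =>
        ContinuousMultilinearMap.apply ℝ (fun _ : Fin n => E') ℝ (fun _ => w)
          (iteratedFDeriv ℝ n f (x + s • w)))
        (ContinuousMultilinearMap.apply ℝ (fun _ : Fin n => E') ℝ (fun _ => w)
          (fderiv ℝ (iteratedFDeriv ℝ n f) (x + s • w) w)) s := h2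
    rw [h2'.deriv, iteratedFDeriv_succ_apply_left]
    rfl

/-- Taylor bound for multivariate functions with bounded top derivative. -/
lemma taylor_bnd {k : ℕ} (hk : 1 ≤ k) {f : E' → ℝ} (hf : ContDiff ℝ (k : ℕ∞) f)
    {C : ℝ} (hC : ∀ x, ‖iteratedFDeriv ℝ k f x‖ ≤ C) (x y : E') :
    |f (x + y) - ∑ i ∈ Finset.range k, (i ! : ℝ)⁻¹ * iteratedFDeriv ℝ i f x (fun _ => y)|
      ≤ (k ! : ℝ)⁻¹ * C * ‖y‖ ^ k := by
  obtain ⟨m, rfl⟩ : ∃ m, k = m + 1 := ⟨k - 1, (Nat.succ_pred_eq_of_pos hk).symm⟩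
  have hline : ContDiff ℝ ((m + 1 : ℕ) : ℕ∞) fun s : ℝ => x + s • y :=
    contDiff_const.add (contDiff_id.smul contDiff_const)
  have hg : ContDiff ℝ ((m + 1 : ℕ) : ℕ∞) fun s : ℝ => f (x + s • y) := hf.comp hline
  set g : ℝ → ℝ := fun s => f (x + s • y) with hgdef
  have huniq : UniqueDiffOn ℝ (Set.Icc (0:ℝ) 1) := uniqueDiffOn_Icc one_pos
  have hwithin : ∀ j : ℕ, j ≤ m + 1 → ∀ s ∈ Set.Icc (0:ℝ) 1,
      iteratedDerivWithin j g (Set.Icc 0 1) s = iteratedDeriv j g s := by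
    intro j hj s hs
    have h1 := ((contDiff_iff_ftaylorSeries.mp hg).hasFTaylorSeriesUpToOn
      (Set.Icc (0:ℝ) 1)).eq_iteratedFDerivWithin_of_uniqueDiffOn
        (by exact_mod_cast hj) huniq hs
    rw [iteratedDerivWithin_eq_iteratedFDerivWithin, iteratedDeriv_eq_iteratedFDeriv, ← h1]
    rfl
  have hgdiff : Differentiable ℝ (iteratedDeriv m g) := by
    have h2 : iteratedDeriv m g = fun s =>
        ContinuousMultilinearMap.apply ℝ (fun _ : Fin m => ℝ) ℝ (fun _ => (1:ℝ))
          (iteratedFDeriv ℝ m g s) := funext fun s => iteratedDeriv_eq_iteratedFDeriv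
    rw [h2]
    exact (ContinuousMultilinearMap.apply ℝ (fun _ : Fin m => ℝ) ℝ
      (fun _ => (1:ℝ))).differentiable.comp
      (hg.differentiable_iteratedFDeriv (by exact_mod_cast Nat.lt_succ_self m))
  have hf1 : ContDiffOn ℝ m g (Set.Icc 0 1) :=
    (hg.of_le (by exact_mod_cast Nat.le_succ m)).contDiffOn
  have hf2 : DifferentiableOn ℝ (iteratedDerivWithin m g (Set.Icc 0 1)) (Set.Ioo 0 1) := by
    intro s hs
    refine ((hgdiff s).differentiableWithinAt).congr
      (fun u hu => hwithin m (Nat.le_succ m) u (Set.Ioo_subset_Icc_self hu))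
      (hwithin m (Nat.le_succ m) s (Set.Ioo_subset_Icc_self hs))
  obtain ⟨ξ, hξ, hT⟩ := taylor_mean_remainder_lagrange (f := g) (x := 1) (x₀ := 0)
    (n := m) one_pos.ne (by rwa [Set.uIcc_of_le zero_le_one]) (by
      rwa [Set.uIcc_of_le zero_le_one, Set.uIoo_of_le zero_le_one])
  rw [Set.uIcc_of_le zero_le_one] at hT
  rw [Set.uIoo_of_le zero_le_one] at hξ
  have hξ' : ξ ∈ Set.Icc (0:ℝ) 1 := Set.Ioo_subset_Icc_self hξ
  have hg1 : g 1 = f (x + y) := by simp [hgdef]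
  have htay : taylorWithinEval g m (Set.Icc 0 1) 0 1
      = ∑ i ∈ Finset.range (m + 1), (i ! : ℝ)⁻¹ * iteratedFDeriv ℝ i f x (fun _ => y) := by
    rw [taylor_within_apply]
    refine Finset.sum_congr rfl fun i hi => ?_
    have hi' : i ≤ m + 1 := (Finset.mem_range.mp hi).le
    rw [hwithin i hi' 0 (by constructor <;> norm_num),
      lineDeriv_eq hf x y i (by exact_mod_cast hi') 0]
    simp [smul_eq_mul]
  have hR : iteratedDerivWithin (m + 1) g (Set.Icc 0 1) ξ
      = iteratedFDeriv ℝ (m + 1) f (x + ξ • y) (fun _ => y) := by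
    rw [hwithin (m + 1) le_rfl ξ hξ', lineDeriv_eq hf x y (m + 1) le_rfl ξ]
  have hfac : (0:ℝ) < (m + 1)! := by exact_mod_cast Nat.factorial_pos (m + 1)
  have hnum : |iteratedFDeriv ℝ (m + 1) f (x + ξ • y) (fun _ => y)| ≤ C * ‖y‖ ^ (m + 1) := by
    have h3 := (iteratedFDeriv ℝ (m + 1) f (x + ξ • y)).le_opNorm (fun _ : Fin (m + 1) => y)
    rw [Real.norm_eq_abs] at h3
    have h4 : (∏ _l : Fin (m + 1), ‖y‖) = ‖y‖ ^ (m + 1) := by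
      rw [Finset.prod_const, Finset.card_univ, Fintype.card_fin]
    rw [h4] at h3
    exact h3.trans (mul_le_mul_of_nonneg_right (hC _) (pow_nonneg (norm_nonneg y) _))
  calc |f (x + y) - ∑ i ∈ Finset.range (m + 1),
        (i ! : ℝ)⁻¹ * iteratedFDeriv ℝ i f x (fun _ => y)|
      = |iteratedDerivWithin (m + 1) g (Set.Icc 0 1) ξ * (1 - 0) ^ (m + 1) / (m + 1)!| := by
        rw [← hg1, ← htay, hT]
    _ = |iteratedFDeriv ℝ (m + 1) f (x + ξ • y) (fun _ => y)| / (m + 1)! := by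
        rw [hR]; rw [abs_div]
        rw [abs_of_pos hfac]
        norm_num
    _ ≤ (C * ‖y‖ ^ (m + 1)) / (m + 1)! := by gcongr
    _ = ((m + 1)! : ℝ)⁻¹ * C * ‖y‖ ^ (m + 1) := by ring

end aux

section euclid

variable {d : ℕ}

lemma coord_abs_le_norm (x : EuclideanSpace ℝ (Fin d)) (j : Fin d) : |x j| ≤ ‖x‖ := by
  rw [EuclideanSpace.norm_eq, ← Real.sqrt_sq_eq_abs]
  apply Real.sqrt_le_sqrt
  have h1 : (x j) ^ 2 = ‖x j‖ ^ 2 := by rw [Real.norm_eq_abs, sq_abs]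
  rw [h1]
  exact Finset.single_le_sum (f := fun i => ‖x i‖ ^ 2) (fun i _ => sq_nonneg _)
    (Finset.mem_univ j)

lemma pow_norm_le {k i : ℕ} (hik : i ≤ k) (v : EuclideanSpace ℝ (Fin d)) :
    ‖v‖ ^ i ≤ 1 + ‖v‖ ^ k := by
  rcases le_total ‖v‖ 1 with hv | hv
  · have : ‖v‖ ^ i ≤ 1 := pow_le_one₀ (norm_nonneg v) hv
    have hk0 : (0:ℝ) ≤ ‖v‖ ^ k := pow_nonneg (norm_nonneg v) k
    linarith
  · have : ‖v‖ ^ i ≤ ‖v‖ ^ k := pow_le_pow_right₀ hv hik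
    linarith

lemma int_aux {k : ℕ} {K : EuclideanSpace ℝ (Fin d) → ℝ}
    (hK_int : Integrable K)
    (hK_mom : Integrable fun t : EuclideanSpace ℝ (Fin d) => ‖t‖ ^ k * |K t|)
    {i : ℕ} (hik : i ≤ k) {ψ : EuclideanSpace ℝ (Fin d) → ℝ} (hψc : Continuous ψ)
    {A : ℝ} (hψ : ∀ v, |ψ v| ≤ A * ‖v‖ ^ i) :
    Integrable fun v => K v * ψ v := by
  refine Integrable.mono' ((hK_int.abs.add hK_mom).const_mul |A|)
    (hK_int.aestronglyMeasurable.mul hψc.aestronglyMeasurable)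
    (Filter.Eventually.of_forall fun v => ?_)
  rw [Real.norm_eq_abs, abs_mul]
  have h1 : A * ‖v‖ ^ i ≤ |A| * (1 + ‖v‖ ^ k) := by
    calc A * ‖v‖ ^ i ≤ |A| * ‖v‖ ^ i :=
          mul_le_mul_of_nonneg_right (le_abs_self A) (pow_nonneg (norm_nonneg v) i)
      _ ≤ |A| * (1 + ‖v‖ ^ k) :=
          mul_le_mul_of_nonneg_left (pow_norm_le hik v) (abs_nonneg A)
  calc |K v| * |ψ v| ≤ |K v| * (|A| * (1 + ‖v‖ ^ k)) :=
        mul_le_mul_of_nonneg_left ((hψ v).trans h1) (abs_nonneg _)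
    _ = |A| * (|K v| + ‖v‖ ^ k * |K v|) := by ring

lemma moment_int {k : ℕ} {K : EuclideanSpace ℝ (Fin d) → ℝ}
    (hK_int : Integrable K)
    (hK_mom : Integrable fun t : EuclideanSpace ℝ (Fin d) => ‖t‖ ^ k * |K t|)
    {i : ℕ} (hik : i ≤ k)
    (m : ContinuousMultilinearMap ℝ (fun _ : Fin i => EuclideanSpace ℝ (Fin d)) ℝ) :
    Integrable fun v => K v * m (fun _ => v) := by
  refine int_aux hK_int hK_mom hik
    (m.coe_continuous.comp (continuous_pi fun _ => continuous_id)) (A := ‖m‖) fun v => ?_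
  have h1 := m.le_opNorm (fun _ => v)
  rw [Real.norm_eq_abs] at h1
  calc |m fun _ => v| ≤ ‖m‖ * ∏ _l : Fin i, ‖v‖ := h1
    _ = ‖m‖ * ‖v‖ ^ i := by rw [Finset.prod_const, Finset.card_univ, Fintype.card_fin]

lemma moment_vanish {k : ℕ} {K : EuclideanSpace ℝ (Fin d) → ℝ}
    (hK_int : Integrable K)
    (hK_mom : Integrable fun t : EuclideanSpace ℝ (Fin d) => ‖t‖ ^ k * |K t|)
    (hK_van : ∀ s : Fin d → ℕ, 1 ≤ ∑ j, s j → (∑ j, s j) ≤ k →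
      (∫ t : EuclideanSpace ℝ (Fin d), (∏ j, (t j) ^ (s j)) * K t) = 0)
    {i : ℕ} (hi1 : 1 ≤ i) (hik : i ≤ k)
    (m : ContinuousMultilinearMap ℝ (fun _ : Fin i => EuclideanSpace ℝ (Fin d)) ℝ) :
    (∫ v, K v * m (fun _ => v)) = 0 := by
  classical
  set b := EuclideanSpace.basisFun (Fin d) ℝ with hb
  have hexp : ∀ v : EuclideanSpace ℝ (Fin d),
      m (fun _ => v) = ∑ g : Fin i → Fin d, (∏ l, v (g l)) * m (fun l => b (g l)) := by
    intro v
    have hv : (fun _ : Fin i => v) = fun _ : Fin i => ∑ j, v j • b j := by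
      funext l
      rw [hb]
      simpa only [EuclideanSpace.basisFun_repr] using
        ((EuclideanSpace.basisFun (Fin d) ℝ).sum_repr v).symm
    rw [hv]
    have hms := m.toMultilinearMap.map_sum (g := fun (_ : Fin i) (j : Fin d) => v j • b j)
    simp only [ContinuousMultilinearMap.coe_coe] at hms
    rw [hms]
    refine Finset.sum_congr rfl fun g _ => ?_
    have := m.map_smul_univ (fun l => v (g l)) (fun l => b (g l))
    rw [this, smul_eq_mul]
  -- fiber counting
  have hprod : ∀ (g : Fin i → Fin d) (v : EuclideanSpace ℝ (Fin d)),
      ∏ l, v (g l) = ∏ j, (v j) ^ ((Finset.univ.filter fun l => g l = j).card) := by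
    intro g v
    rw [← Finset.prod_fiberwise Finset.univ g (fun l => v (g l))]
    refine Finset.prod_congr rfl fun j _ => ?_
    rw [Finset.prod_congr rfl (fun l hl => congrArg v (Finset.mem_filter.mp hl).2),
      Finset.prod_const]
  have hcard : ∀ g : Fin i → Fin d,
      (∑ j, (Finset.univ.filter fun l => g l = j).card) = i := by
    intro g
    have := Finset.card_eq_sum_card_fiberwise
      (f := g) (s := Finset.univ) (t := Finset.univ) (fun x _ => Finset.mem_univ _)
    simpa using this.symm
  have habs : ∀ (g : Fin i → Fin d) (v : EuclideanSpace ℝ (Fin d)),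
      |∏ l, v (g l)| ≤ ‖v‖ ^ i := by
    intro g v
    rw [Finset.abs_prod]
    calc (∏ l, |v (g l)|) ≤ ∏ _l : Fin i, ‖v‖ :=
          Finset.prod_le_prod (fun l _ => abs_nonneg _) (fun l _ => coord_abs_le_norm v (g l))
      _ = ‖v‖ ^ i := by rw [Finset.prod_const, Finset.card_univ, Fintype.card_fin]
  have hint : ∀ g : Fin i → Fin d,
      Integrable (fun v : EuclideanSpace ℝ (Fin d) =>
        K v * ((∏ l, v (g l)) * m (fun l => b (g l)))) := by
    intro g
    refine int_aux hK_int hK_mom hik ?_ (A := |m (fun l => b (g l))|) fun v => ?_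
    · exact (continuous_finset_prod Finset.univ
        (fun l _ => (continuous_apply (g l)).comp (PiLp.continuous_ofLp 2 _))).mul continuous_const
    · rw [abs_mul, mul_comm]
      exact mul_le_mul_of_nonneg_left (habs g v) (abs_nonneg _)
  calc (∫ v, K v * m (fun _ => v))
      = ∫ v : EuclideanSpace ℝ (Fin d),
          ∑ g : Fin i → Fin d, K v * ((∏ l, v (g l)) * m (fun l => b (g l))) := by
        congr 1; funext v; rw [hexp v, Finset.mul_sum]
    _ = ∑ g : Fin i → Fin d,
          ∫ v : EuclideanSpace ℝ (Fin d), K v * ((∏ l, v (g l)) * m (fun l => b (g l))) :=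
        integral_finset_sum _ (fun g _ => hint g)
    _ = 0 := by
        refine Finset.sum_eq_zero fun g _ => ?_
        have hrw : ∀ v : EuclideanSpace ℝ (Fin d),
            K v * ((∏ l, v (g l)) * m (fun l => b (g l)))
            = m (fun l => b (g l)) *
              ((∏ j, (v j) ^ ((Finset.univ.filter fun l => g l = j).card)) * K v) := by
          intro v; rw [← hprod g v]; ring
        simp_rw [hrw]
        rw [integral_const_mul, hK_van _ (by rw [hcard g]; exact hi1) (by rw [hcard g]; exact hik),
          mul_zero]

end euclid

theorem stmt15 (d k : ℕ) (hd : 1 ≤ d) (hk : 1 ≤ k)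
    (f K : EuclideanSpace ℝ (Fin d) → ℝ)
    (hf_smooth : ContDiff ℝ (k : ℕ∞) f)
    (hf_bd : ∀ i : ℕ, i ≤ k → ∃ Ci : ℝ, ∀ x, ‖iteratedFDeriv ℝ i f x‖ ≤ Ci)
    (hK_int : Integrable K)
    (hK_one : (∫ t : EuclideanSpace ℝ (Fin d), K t) = 1)
    (hK_mom : Integrable (fun t : EuclideanSpace ℝ (Fin d) => ‖t‖ ^ k * |K t|))
    (hK_van : ∀ s : Fin d → ℕ, 1 ≤ ∑ j, s j → (∑ j, s j) ≤ k →
      (∫ t : EuclideanSpace ℝ (Fin d), (∏ j, (t j) ^ (s j)) * K t) = 0) :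
    ∃ C : ℝ, ∀ (t : EuclideanSpace ℝ (Fin d)) (h : ℝ), 0 < h →
      |(∫ u, (h⁻¹ * K ((h ^ ((1 : ℝ) / d))⁻¹ • (t - u))) * f u) - f t| ≤
        C * h ^ ((k : ℝ) / d) := by
  obtain ⟨Ck, hCk⟩ := hf_bd k le_rfl
  have hf_cont : Continuous f := hf_smooth.continuous
  obtain ⟨C0, hC0⟩ := hf_bd 0 (Nat.zero_le k)
  have hC0' : ∀ x, |f x| ≤ C0 := fun x => by
    have := hC0 x; rwa [norm_iteratedFDeriv_zero, Real.norm_eq_abs] at this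
  refine ⟨(k ! : ℝ)⁻¹ * Ck * ∫ v : EuclideanSpace ℝ (Fin d), ‖v‖ ^ k * |K v|,
    fun t h hh => ?_⟩
  set c : ℝ := h ^ ((1:ℝ)/d) with hcdef
  have hd0 : (d:ℝ) ≠ 0 := Nat.cast_ne_zero.mpr (by omega)
  have hc0 : 0 < c := Real.rpow_pos_of_pos hh _
  have hcd : c ^ d = h := by
    rw [hcdef, ← Real.rpow_natCast (h ^ ((1:ℝ)/d)) d, ← Real.rpow_mul hh.le,
      one_div, inv_mul_cancel₀ hd0, Real.rpow_one]
  have hck : c ^ k = h ^ ((k:ℝ)/d) := by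
    rw [hcdef, ← Real.rpow_natCast (h ^ ((1:ℝ)/d)) k, ← Real.rpow_mul hh.le]
    congr 1
    field_simp
  -- change of variables
  have hsub : (∫ u, (h⁻¹ * K (c⁻¹ • (t - u))) * f u)
      = ∫ w : EuclideanSpace ℝ (Fin d), (h⁻¹ * K (c⁻¹ • w)) * f (t - w) := by
    calc (∫ u, (h⁻¹ * K (c⁻¹ • (t - u))) * f u)
        = ∫ u, (fun w => (h⁻¹ * K (c⁻¹ • w)) * f (t - w)) (t - u) := by
          congr 1; funext u; simp [sub_sub_cancel]
      _ = ∫ w : EuclideanSpace ℝ (Fin d), (h⁻¹ * K (c⁻¹ • w)) * f (t - w) :=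
          integral_sub_left_eq_self (fun w => (h⁻¹ * K (c⁻¹ • w)) * f (t - w)) volume t
  have hcv : (∫ w : EuclideanSpace ℝ (Fin d), (h⁻¹ * K (c⁻¹ • w)) * f (t - w))
      = ∫ v : EuclideanSpace ℝ (Fin d), K v * f (t - c • v) := by
    have h2 := Measure.integral_comp_smul (volume : Measure (EuclideanSpace ℝ (Fin d)))
      (fun w => (h⁻¹ * K (c⁻¹ • w)) * f (t - w)) c
    rw [finrank_euclideanSpace_fin, hcd] at h2
    simp only [smul_smul, inv_mul_cancel₀ hc0.ne', one_smul] at h2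
    rw [abs_of_pos (inv_pos.mpr hh)] at h2
    have e2 : (∫ v : EuclideanSpace ℝ (Fin d), (h⁻¹ * K v) * f (t - c • v))
        = h⁻¹ * ∫ v : EuclideanSpace ℝ (Fin d), K v * f (t - c • v) := by
      rw [← integral_const_mul]; congr 1; funext v; ring
    rw [e2, smul_eq_mul] at h2
    exact (mul_left_cancel₀ (inv_ne_zero hh.ne') h2).symm
  rw [hsub, hcv]
  -- integrability
  have hI1 : Integrable (fun v : EuclideanSpace ℝ (Fin d) => K v * f (t - c • v)) := by
    refine int_aux hK_int hK_mom (Nat.zero_le k)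
      (hf_cont.comp (continuous_const.sub (continuous_id.const_smul c))) (A := C0)
      fun v => ?_
    simpa using hC0' (t - c • v)
  have hgint : ∀ i, i ≤ k → Integrable (fun v : EuclideanSpace ℝ (Fin d) => K v *
      ((i ! : ℝ)⁻¹ * iteratedFDeriv ℝ i f t (fun _ => (-c) • v))) := by
    intro i hik
    refine int_aux hK_int hK_mom hik ?_
      (A := (i ! : ℝ)⁻¹ * (‖iteratedFDeriv ℝ i f t‖ * c ^ i)) fun v => ?_
    · exact continuous_const.mul ((iteratedFDeriv ℝ i f t).coe_continuous.comp
        (continuous_pi fun _ => continuous_id.const_smul (-c)))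
    · rw [abs_mul, abs_of_nonneg (a := (i ! : ℝ)⁻¹) (by positivity)]
      have h3 := (iteratedFDeriv ℝ i f t).le_opNorm (fun _ : Fin i => (-c) • v)
      rw [Real.norm_eq_abs] at h3
      have h4 : (∏ _l : Fin i, ‖(-c) • v‖) = c ^ i * ‖v‖ ^ i := by
        rw [Finset.prod_const, Finset.card_univ, Fintype.card_fin, norm_smul,
          Real.norm_eq_abs, abs_neg, abs_of_pos hc0, mul_pow]
      rw [h4] at h3
      calc (i ! : ℝ)⁻¹ * |iteratedFDeriv ℝ i f t fun _ => (-c) • v|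
          ≤ (i ! : ℝ)⁻¹ * (‖iteratedFDeriv ℝ i f t‖ * (c ^ i * ‖v‖ ^ i)) :=
            mul_le_mul_of_nonneg_left h3 (by positivity)
        _ = (i ! : ℝ)⁻¹ * (‖iteratedFDeriv ℝ i f t‖ * c ^ i) * ‖v‖ ^ i := by ring
  have hIP : Integrable (fun v : EuclideanSpace ℝ (Fin d) => K v *
      ∑ i ∈ Finset.range k, (i ! : ℝ)⁻¹ * iteratedFDeriv ℝ i f t (fun _ => (-c) • v)) := by
    have heq : (fun v : EuclideanSpace ℝ (Fin d) => K v *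
        ∑ i ∈ Finset.range k, (i ! : ℝ)⁻¹ * iteratedFDeriv ℝ i f t (fun _ => (-c) • v))
        = fun v => ∑ i ∈ Finset.range k,
            K v * ((i ! : ℝ)⁻¹ * iteratedFDeriv ℝ i f t (fun _ => (-c) • v)) := by
      funext v; rw [Finset.mul_sum]
    rw [heq]
    exact integrable_finset_sum _ fun i hi => hgint i (Finset.mem_range.mp hi).le
  have hIR : Integrable (fun v : EuclideanSpace ℝ (Fin d) => K v * (f (t - c • v) -
      ∑ i ∈ Finset.range k, (i ! : ℝ)⁻¹ * iteratedFDeriv ℝ i f t (fun _ => (-c) • v))) := by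
    have heq : (fun v : EuclideanSpace ℝ (Fin d) => K v * (f (t - c • v) -
        ∑ i ∈ Finset.range k, (i ! : ℝ)⁻¹ * iteratedFDeriv ℝ i f t (fun _ => (-c) • v)))
        = fun v => K v * f (t - c • v) - K v *
            ∑ i ∈ Finset.range k, (i ! : ℝ)⁻¹ * iteratedFDeriv ℝ i f t (fun _ => (-c) • v) := by
      funext v; ring
    rw [heq]
    exact hI1.sub hIP
  -- split the integral
  have hsplit : (∫ v : EuclideanSpace ℝ (Fin d), K v * f (t - c • v))
      = (∫ v : EuclideanSpace ℝ (Fin d), K v * (f (t - c • v) -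
          ∑ i ∈ Finset.range k, (i ! : ℝ)⁻¹ * iteratedFDeriv ℝ i f t (fun _ => (-c) • v)))
        + ∫ v : EuclideanSpace ℝ (Fin d), K v *
            ∑ i ∈ Finset.range k, (i ! : ℝ)⁻¹ * iteratedFDeriv ℝ i f t (fun _ => (-c) • v) := by
    rw [← integral_add hIR hIP]
    congr 1; funext v; ring
  -- the polynomial part integrates to f t
  have hKP : (∫ v : EuclideanSpace ℝ (Fin d), K v *
      ∑ i ∈ Finset.range k, (i ! : ℝ)⁻¹ * iteratedFDeriv ℝ i f t (fun _ => (-c) • v))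
      = f t := by
    have h1 : (∫ v : EuclideanSpace ℝ (Fin d), K v *
        ∑ i ∈ Finset.range k, (i ! : ℝ)⁻¹ * iteratedFDeriv ℝ i f t (fun _ => (-c) • v))
        = ∑ i ∈ Finset.range k, ∫ v : EuclideanSpace ℝ (Fin d),
            K v * ((i ! : ℝ)⁻¹ * iteratedFDeriv ℝ i f t (fun _ => (-c) • v)) := by
      rw [show (fun v : EuclideanSpace ℝ (Fin d) => K v *
          ∑ i ∈ Finset.range k, (i ! : ℝ)⁻¹ * iteratedFDeriv ℝ i f t (fun _ => (-c) • v))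
          = fun v => ∑ i ∈ Finset.range k,
              K v * ((i ! : ℝ)⁻¹ * iteratedFDeriv ℝ i f t (fun _ => (-c) • v)) from
        funext fun v => Finset.mul_sum _ _ _]
      exact integral_finset_sum _ fun i hi => hgint i (Finset.mem_range.mp hi).le
    obtain ⟨km, hkm⟩ : ∃ km, k = km + 1 := ⟨k - 1, (Nat.succ_pred_eq_of_pos hk).symm⟩
    rw [h1, hkm, Finset.sum_range_succ']
    have hterm0 : (∫ v : EuclideanSpace ℝ (Fin d),
        K v * ((0! : ℝ)⁻¹ * iteratedFDeriv ℝ 0 f t (fun _ => (-c) • v))) = f t := by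
      have heq : ∀ v : EuclideanSpace ℝ (Fin d),
          K v * ((0! : ℝ)⁻¹ * iteratedFDeriv ℝ 0 f t (fun _ => (-c) • v)) = K v * f t := by
        intro v
        rw [iteratedFDeriv_zero_apply]
        norm_num
      simp_rw [heq]
      rw [integral_mul_const, hK_one, one_mul]
    have htermi : ∀ i ∈ Finset.range km, (∫ v : EuclideanSpace ℝ (Fin d),
        K v * (((i+1)! : ℝ)⁻¹ * iteratedFDeriv ℝ (i+1) f t (fun _ => (-c) • v))) = 0 := by
      intro i hi
      have hik : i + 1 ≤ k := by
        have := Finset.mem_range.mp hi; omega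
      have hres : ∀ v : EuclideanSpace ℝ (Fin d),
          K v * (((i+1)! : ℝ)⁻¹ * iteratedFDeriv ℝ (i+1) f t (fun _ => (-c) • v))
          = (((i+1)! : ℝ)⁻¹ * (-c) ^ (i+1)) *
              (K v * iteratedFDeriv ℝ (i+1) f t (fun _ => v)) := by
        intro v
        have hsm := (iteratedFDeriv ℝ (i+1) f t).map_smul_univ
          (fun _ : Fin (i+1) => -c) (fun _ => v)
        rw [show (fun _ : Fin (i+1) => (-c) • v)
            = fun l : Fin (i+1) => (fun _ : Fin (i+1) => -c) l • (fun _ : Fin (i+1) => v) l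
          from rfl, hsm, Finset.prod_const, Finset.card_univ, Fintype.card_fin, smul_eq_mul]
        ring
      simp_rw [hres]
      rw [integral_const_mul,
        moment_vanish hK_int hK_mom hK_van (Nat.succ_le_succ (Nat.zero_le i)) hik _, mul_zero]
    rw [Finset.sum_eq_zero htermi, zero_add, hterm0]
  rw [hsplit, hKP, add_sub_cancel_right]
  -- final bound
  have hptw : ∀ v : EuclideanSpace ℝ (Fin d),
      |K v * (f (t - c • v) -
        ∑ i ∈ Finset.range k, (i ! : ℝ)⁻¹ * iteratedFDeriv ℝ i f t (fun _ => (-c) • v))|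
      ≤ ((k ! : ℝ)⁻¹ * Ck * c ^ k) * (‖v‖ ^ k * |K v|) := by
    intro v
    have htb := taylor_bnd hk hf_smooth hCk t ((-c) • v)
    rw [show t + (-c) • v = t - c • v from by rw [neg_smul, ← sub_eq_add_neg]] at htb
    have hnrm : ‖(-c) • v‖ ^ k = c ^ k * ‖v‖ ^ k := by
      rw [norm_smul, Real.norm_eq_abs, abs_neg, abs_of_pos hc0, mul_pow]
    rw [hnrm] at htb
    calc |K v * (f (t - c • v) -
          ∑ i ∈ Finset.range k, (i ! : ℝ)⁻¹ * iteratedFDeriv ℝ i f t (fun _ => (-c) • v))|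
        = |K v| * |f (t - c • v) -
            ∑ i ∈ Finset.range k, (i ! : ℝ)⁻¹ * iteratedFDeriv ℝ i f t (fun _ => (-c) • v)| :=
          abs_mul _ _
      _ ≤ |K v| * ((k ! : ℝ)⁻¹ * Ck * (c ^ k * ‖v‖ ^ k)) :=
          mul_le_mul_of_nonneg_left htb (abs_nonneg _)
      _ = ((k ! : ℝ)⁻¹ * Ck * c ^ k) * (‖v‖ ^ k * |K v|) := by ring
  calc |∫ v : EuclideanSpace ℝ (Fin d), K v * (f (t - c • v) -
        ∑ i ∈ Finset.range k, (i ! : ℝ)⁻¹ * iteratedFDeriv ℝ i f t (fun _ => (-c) • v))|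
      ≤ ∫ v : EuclideanSpace ℝ (Fin d), |K v * (f (t - c • v) -
          ∑ i ∈ Finset.range k, (i ! : ℝ)⁻¹ * iteratedFDeriv ℝ i f t (fun _ => (-c) • v))| := by
        simpa only [Real.norm_eq_abs] using
          norm_integral_le_integral_norm (μ := volume) (fun v : EuclideanSpace ℝ (Fin d) =>
            K v * (f (t - c • v) - ∑ i ∈ Finset.range k,
              (i ! : ℝ)⁻¹ * iteratedFDeriv ℝ i f t (fun _ => (-c) • v)))
    _ ≤ ∫ v : EuclideanSpace ℝ (Fin d),
          ((k ! : ℝ)⁻¹ * Ck * c ^ k) * (‖v‖ ^ k * |K v|) :=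
        integral_mono hIR.abs (hK_mom.const_mul _) hptw
    _ = ((k ! : ℝ)⁻¹ * Ck * c ^ k) * ∫ v : EuclideanSpace ℝ (Fin d), ‖v‖ ^ k * |K v| :=
        integral_const_mul _ _
    _ = (k ! : ℝ)⁻¹ * Ck * (∫ v : EuclideanSpace ℝ (Fin d), ‖v‖ ^ k * |K v|)
          * h ^ ((k:ℝ)/d) := by rw [← hck]; ring
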